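/- (Combined error bound in the static case.) Suppose u ∈ V satisfies a(u, v) = f(v) for all v ∈ V. Let V^R ⊆ V_n ⊆ V be finite-dimensional subspaces, let u_n be a Galerkin solution on V_n, and let u^R be a Galerkin solution on V^R. Then ‖u − u^R‖_V ≤ (γ/α) ‖u − P_{V_n} u‖_V + (γ/α) ‖u_n − P_{V^R} u_n‖_V. -/

import Mathlib

open scoped RealInnerProductSpace

/-- Orthogonal projection onto a submodule, as a plain function; it equals the usual
orthogonal projection whenever the submodule is finite-dimensional. -/
noncomputable def orthProj {V : Type*} [NormedAddCommGroup V] [InnerProductSpace ℝ V]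
    (K : Submodule ℝ V) (x : V) : V := by
  classical
  exact if h : FiniteDimensional ℝ K then
    haveI := h
    (K.orthogonalProjectionOnto x : V)
  else 0

lemma orthProj_eq {V : Type*} [NormedAddCommGroup V] [InnerProductSpace ℝ V]
    (K : Submodule ℝ V) [h : FiniteDimensional ℝ K] (x : V) :
    orthProj K x = (K.orthogonalProjectionOnto x : V) := by
  simp [orthProj, h]

lemma cea_lemma {V : Type*} [NormedAddCommGroup V] [InnerProductSpace ℝ V]
    (a : V →ₗ[ℝ] V →ₗ[ℝ] ℝ)
    (α γ : ℝ) (hα : 0 < α) (hγ : 0 ≤ γ)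
    (hcoer : ∀ v : V, α * ‖v‖ ^ 2 ≤ a v v)
    (hcont : ∀ v w : V, |a v w| ≤ γ * ‖v‖ * ‖w‖)
    (W : Submodule ℝ V) [FiniteDimensional ℝ W]
    (u uW : V) (huW : uW ∈ W)
    (horth : ∀ w ∈ W, a (u - uW) w = 0) :
    ‖u - uW‖ ≤ γ / α * ‖u - orthProj W u‖ := by
  set p : V := orthProj W u with hp
  have hpW : p ∈ W := by
    rw [hp, orthProj_eq]; exact (W.orthogonalProjectionOnto u).2
  set e : V := u - uW with he
  have key : a e e = a e (u - p) := by
    have h1 : u - p = e + (uW - p) := by rw [he]; abel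
    have h2 : a e (uW - p) = 0 := horth _ (W.sub_mem huW hpW)
    rw [h1, map_add, h2, add_zero]
  have hub : α * ‖e‖ ^ 2 ≤ γ * ‖e‖ * ‖u - p‖ := by
    calc α * ‖e‖ ^ 2 ≤ a e e := hcoer e
      _ = a e (u - p) := key
      _ ≤ |a e (u - p)| := le_abs_self _
      _ ≤ γ * ‖e‖ * ‖u - p‖ := hcont _ _
  rcases eq_or_lt_of_le (norm_nonneg e) with h0 | h0
  · rw [← h0]
    positivity
  · rw [div_mul_eq_mul_div, le_div_iff₀ hα]
    nlinarith [norm_nonneg (u - p)]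

/-- **Combined error bound in the static case** (`V^R ⊆ V_n`): `‖u - u^R‖ ≤ (γ/α)‖u - P_{V_n} u‖ + (γ/α)‖u_n - P_{V^R} u_n‖`. -/
theorem combined_error_bound_static
    {V : Type*} [NormedAddCommGroup V] [InnerProductSpace ℝ V]
    (a : V →ₗ[ℝ] V →ₗ[ℝ] ℝ) (f : V →ₗ[ℝ] ℝ)
    (α γ : ℝ) (hα : 0 < α)
    (hcoer : ∀ v : V, α * ‖v‖ ^ 2 ≤ a v v)
    (hcont : ∀ v w : V, |a v w| ≤ γ * ‖v‖ * ‖w‖)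
    (u : V) (hu : ∀ v : V, a u v = f v)
    (Vn VR : Submodule ℝ V) [FiniteDimensional ℝ ↥Vn] [FiniteDimensional ℝ ↥VR]
    (hRn : VR ≤ Vn)
    (un : V) (hun : un ∈ Vn) (hGaln : ∀ w ∈ Vn, a un w = f w)
    (uR : V) (huR : uR ∈ VR) (hGalR : ∀ w ∈ VR, a uR w = f w) :
    ‖u - uR‖ ≤ (γ / α) * ‖u - orthProj Vn u‖ + (γ / α) * ‖un - orthProj VR un‖ := by
  by_cases hγ : 0 ≤ γ
  · have e1 : ‖u - un‖ ≤ γ / α * ‖u - orthProj Vn u‖ := by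
      apply cea_lemma a α γ hα hγ hcoer hcont Vn u un hun
      intro w hw
      simp [map_sub, hu w, hGaln w hw]
    have e2 : ‖un - uR‖ ≤ γ / α * ‖un - orthProj VR un‖ := by
      apply cea_lemma a α γ hα hγ hcoer hcont VR un uR huR
      intro w hw
      simp [map_sub, hGaln w (hRn hw), hGalR w hw]
    calc ‖u - uR‖ = ‖(u - un) + (un - uR)‖ := by abel_nf
      _ ≤ ‖u - un‖ + ‖un - uR‖ := norm_add_le _ _
      _ ≤ _ := add_le_add e1 e2
  · push_neg at hγ
    have hzero : ∀ v : V, v = 0 := by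
      intro v
      have h1 : α * ‖v‖ ^ 2 ≤ γ * ‖v‖ * ‖v‖ :=
        (hcoer v).trans ((le_abs_self _).trans (hcont v v))
      have : ‖v‖ = 0 := by
        by_contra h0
        have hv : 0 < ‖v‖ := lt_of_le_of_ne (norm_nonneg v) (Ne.symm h0)
        nlinarith [mul_pos hv hv, mul_pos hα (mul_pos hv hv)]
      exact norm_eq_zero.mp this
    simp [hzero u, hzero uR, hzero un, hzero (orthProj Vn 0), hzero (orthProj VR 0)]
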